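/- For the associated metric g̃ on the quasi-Kähler Lie group example, the square norm of ∇̃J with respect to g̃ equals −8(λ₁λ₃ + λ₂λ₄); hence (G,J,g̃) is isotropic Kähler if and only if λ₁λ₃ + λ₂λ₄ = 0. -/

import Mathlib

noncomputable section

/-- The standard basis of `ℝ⁴` (denoted `X₁,…,X₄` in the paper). -/
def e (i : Fin 4) : Fin 4 → ℝ := Pi.single i 1

/-- The almost complex structure: `J X₁ = X₃, J X₂ = X₄, J X₃ = −X₁, J X₄ = −X₂`. -/
def Jm (x : Fin 4 → ℝ) : Fin 4 → ℝ := ![-(x 2), -(x 3), x 0, x 1]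

/-- The Norden metric `g = diag(1,1,−1,−1)`. -/
def gm (x y : Fin 4 → ℝ) : ℝ := x 0 * y 0 + x 1 * y 1 - x 2 * y 2 - x 3 * y 3

/-- The associated Norden metric `g̃(x,y) = g(x,Jy)`. -/
def gt (x y : Fin 4 → ℝ) : ℝ := gm x (Jm y)

/-- The bracket of the 4-parametric family of Lie algebras:
`[X₁,X₃]=λ₂X₂+λ₄X₄`, `[X₂,X₄]=λ₁X₁+λ₃X₃`, `[X₂,X₃]=−λ₂X₁−λ₃X₄`,
`[X₃,X₄]=−λ₄X₁+λ₃X₂`, `[X₄,X₁]=λ₁X₂+λ₄X₃`, `[X₂,X₁]=−λ₂X₃+λ₁X₄`,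
extended bilinearly and skew-symmetrically (here with 0-based indices). -/
def br (l1 l2 l3 l4 : ℝ) (x y : Fin 4 → ℝ) : Fin 4 → ℝ :=
  ![ -l2*(x 1*y 2 - x 2*y 1) + l1*(x 1*y 3 - x 3*y 1) - l4*(x 2*y 3 - x 3*y 2),
      l2*(x 0*y 2 - x 2*y 0) - l1*(x 0*y 3 - x 3*y 0) + l3*(x 2*y 3 - x 3*y 2),
      l2*(x 0*y 1 - x 1*y 0) - l4*(x 0*y 3 - x 3*y 0) + l3*(x 1*y 3 - x 3*y 1),
     -l1*(x 0*y 1 - x 1*y 0) + l4*(x 0*y 2 - x 2*y 0) - l3*(x 1*y 2 - x 2*y 1) ]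

/-- The Levi-Civita connection of `g`: `∇_x y = ½[x,y]`. -/
def nab (l1 l2 l3 l4 : ℝ) (x y : Fin 4 → ℝ) : Fin 4 → ℝ :=
  ((1 : ℝ)/2) • br l1 l2 l3 l4 x y

/-- The matrix of `g` in the standard basis. -/
def G : Matrix (Fin 4) (Fin 4) ℝ := fun i j => gm (e i) (e j)

/-- The matrix of `g̃` in the standard basis. -/
def Gt : Matrix (Fin 4) (Fin 4) ℝ := fun i j => gt (e i) (e j)

lemma e0 : e 0 = ![1,0,0,0] := by funext m; fin_cases m <;> simp [e, Pi.single_apply]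
lemma e1 : e 1 = ![0,1,0,0] := by funext m; fin_cases m <;> simp [e, Pi.single_apply]
lemma e2 : e 2 = ![0,0,1,0] := by funext m; fin_cases m <;> simp [e, Pi.single_apply]
lemma e3 : e 3 = ![0,0,0,1] := by funext m; fin_cases m <;> simp [e, Pi.single_apply]

lemma gt_symm (x y : Fin 4 → ℝ) : gt x y = gt y x := by
  simp [gt, gm, Jm]; ring

lemma gt_add_left (a b c : Fin 4 → ℝ) : gt (a + b) c = gt a c + gt b c := by
  simp [gt, gm, Jm]; ring

lemma gt_add_right (a b c : Fin 4 → ℝ) : gt a (b + c) = gt a b + gt a c := by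
  simp [gt, gm, Jm]; ring

def K (l1 l2 l3 l4 : ℝ) (x y z : Fin 4 → ℝ) : ℝ :=
  gt (br l1 l2 l3 l4 x y) z + gt y (br l1 l2 l3 l4 z x) - gt x (br l1 l2 l3 l4 y z)

def Nv (l1 l2 l3 l4 : ℝ) (x y : Fin 4 → ℝ) : Fin 4 → ℝ :=
  ![ -(1/2)*K l1 l2 l3 l4 x y (e 2), -(1/2)*K l1 l2 l3 l4 x y (e 3),
     -(1/2)*K l1 l2 l3 l4 x y (e 0), -(1/2)*K l1 l2 l3 l4 x y (e 1) ]

set_option maxHeartbeats 1000000 in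
lemma Nv_eq (l1 l2 l3 l4 : ℝ) (x y : Fin 4 → ℝ) : Nv l1 l2 l3 l4 x y =
    ![ -1*l4*x 2*y 3 + (-1/2)*l4*x 1*y 0 + (-1/2)*l4*x 0*y 1 + 1*l3*x 3*y 3 + 1*l3*x 1*y 1 + (-1/2)*l2*x 3*y 0 + 1*l2*x 2*y 1 + (-1/2)*l2*x 0*y 3 + (-1/2)*l1*x 3*y 1 + (1/2)*l1*x 1*y 3,
       1*l4*x 2*y 2 + 1*l4*x 0*y 0 + -1*l3*x 3*y 2 + (-1/2)*l3*x 1*y 0 + (-1/2)*l3*x 0*y 1 + (-1/2)*l2*x 2*y 0 + (1/2)*l2*x 0*y 2 + 1*l1*x 3*y 0 + (-1/2)*l1*x 2*y 1 + (-1/2)*l1*x 1*y 2,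
       (1/2)*l4*x 2*y 1 + (1/2)*l4*x 1*y 2 + -1*l4*x 0*y 3 + (-1/2)*l3*x 3*y 1 + (1/2)*l3*x 1*y 3 + (1/2)*l2*x 3*y 2 + (1/2)*l2*x 2*y 3 + 1*l2*x 0*y 1 + -1*l1*x 3*y 3 + -1*l1*x 1*y 1,
       (-1/2)*l4*x 2*y 0 + (1/2)*l4*x 0*y 2 + (1/2)*l3*x 3*y 0 + -1*l3*x 1*y 2 + (1/2)*l3*x 0*y 3 + -1*l2*x 2*y 2 + -1*l2*x 0*y 0 + (1/2)*l1*x 3*y 2 + (1/2)*l1*x 2*y 3 + 1*l1*x 1*y 0 ] := by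
  funext m; fin_cases m <;>
    (norm_num [Nv, K, gt, gm, br, Jm, e0, e1, e2, e3, Matrix.cons_val_zero,
      Matrix.cons_val_one, Matrix.head_cons, Matrix.cons_val_two, Matrix.tail_cons,
      Matrix.cons_val_three]; try ring)

lemma Gt_inv : Gt⁻¹ = Gt := by
  have h : Gt * Gt = 1 := by
    ext i j
    fin_cases i <;> fin_cases j <;>
      simp [Gt, gt, gm, Jm, e, Matrix.mul_apply, Fin.sum_univ_four, Matrix.one_apply,
        Pi.single_apply]
  exact Matrix.inv_eq_right_inv h

theorem stmt_13' (l1 l2 l3 l4 : ℝ)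
    (nt : (Fin 4 → ℝ) → (Fin 4 → ℝ) → (Fin 4 → ℝ))
    (hnt_tor : ∀ x y, nt x y - nt y x = br l1 l2 l3 l4 x y)
    (hnt_met : ∀ x y z, gt (nt x y) z + gt y (nt x z) = 0) :
    ∀ x y, nt x y = Nv l1 l2 l3 l4 x y := by
  have tor : ∀ x y, nt x y = br l1 l2 l3 l4 x y + nt y x := fun x y =>
    sub_eq_iff_eq_add.mp (hnt_tor x y)
  have koszul : ∀ x y z, 2 * gt (nt x y) z = K l1 l2 l3 l4 x y z := by
    intro x y z
    have m1 := hnt_met y x z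
    have m2 := hnt_met z y x
    have m3 := hnt_met x z y
    have a1 : gt (nt x y) z = gt (br l1 l2 l3 l4 x y) z + gt (nt y x) z := by
      rw [tor x y, gt_add_left]
    have a2 : gt x (nt y z) = gt x (br l1 l2 l3 l4 y z) + gt x (nt z y) := by
      rw [tor y z, gt_add_right]
    have a3 : gt y (nt z x) = gt y (br l1 l2 l3 l4 z x) + gt y (nt x z) := by
      rw [tor z x, gt_add_right]
    have s1 : gt (nt z y) x = gt x (nt z y) := gt_symm _ _
    have s2 : gt y (nt x z) = gt (nt x z) y := gt_symm _ _
    have s3 : gt z (nt x y) = gt (nt x y) z := gt_symm _ _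
    unfold K
    linarith
  intro x y
  funext m
  have c0 : gt (nt x y) (e 2) = -(nt x y 0) := by simp [gt, gm, Jm, e, Pi.single_apply]
  have c1 : gt (nt x y) (e 3) = -(nt x y 1) := by simp [gt, gm, Jm, e, Pi.single_apply]
  have c2 : gt (nt x y) (e 0) = -(nt x y 2) := by simp [gt, gm, Jm, e, Pi.single_apply]
  have c3 : gt (nt x y) (e 1) = -(nt x y 3) := by simp [gt, gm, Jm, e, Pi.single_apply]
  have k0 := koszul x y (e 2)
  have k1 := koszul x y (e 3)
  have k2 := koszul x y (e 0)
  have k3 := koszul x y (e 1)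
  fin_cases m
  · show nt x y 0 = Nv l1 l2 l3 l4 x y 0
    simp only [Nv, Matrix.cons_val_zero]; linarith
  · show nt x y 1 = Nv l1 l2 l3 l4 x y 1
    simp only [Nv, Matrix.cons_val_one, Matrix.head_cons, Matrix.cons_val_zero]; linarith
  · show nt x y 2 = Nv l1 l2 l3 l4 x y 2
    simp only [Nv, Matrix.cons_val_two, Matrix.tail_cons, Matrix.head_cons]; linarith
  · show nt x y 3 = Nv l1 l2 l3 l4 x y 3
    simp only [Nv, Matrix.cons_val_three, Matrix.tail_cons, Matrix.head_cons]; linarith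

set_option maxHeartbeats 4000000 in
/-- The square norm `‖∇̃J‖ = g̃ⁱʲ g̃ᵏˡ g̃((∇̃_{eᵢ}J)e_k, (∇̃_{eⱼ}J)e_l)` equals
`−8(λ₁λ₃ + λ₂λ₄)`; hence `(G,J,g̃)` is isotropic Kähler iff `λ₁λ₃ + λ₂λ₄ = 0`. -/
theorem stmt_13 (l1 l2 l3 l4 : ℝ)
    -- `nt` is the Levi-Civita connection `∇̃` of the (left-invariant) metric `g̃`:
    -- the unique bilinear, torsion-free, `g̃`-compatible connection on the Lie algebra
    (nt : (Fin 4 → ℝ) → (Fin 4 → ℝ) → (Fin 4 → ℝ))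
    (hnt_addl : ∀ x y z, nt (x + y) z = nt x z + nt y z)
    (hnt_smull : ∀ (c : ℝ) x z, nt (c • x) z = c • nt x z)
    (hnt_addr : ∀ x y z, nt x (y + z) = nt x y + nt x z)
    (hnt_smulr : ∀ (c : ℝ) x y, nt x (c • y) = c • nt x y)
    (hnt_tor : ∀ x y, nt x y - nt y x = br l1 l2 l3 l4 x y)
    (hnt_met : ∀ x y z, gt (nt x y) z + gt y (nt x z) = 0)
    -- `nJt i k = (∇̃_{eᵢ} J) e_k`
    (nJt : Fin 4 → Fin 4 → (Fin 4 → ℝ))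
    (hnJt : ∀ i k, nJt i k = nt (e i) (Jm (e k)) - Jm (nt (e i) (e k))) :
    (∑ i, ∑ j, ∑ k, ∑ m, Gt⁻¹ i j * Gt⁻¹ k m * gt (nJt i k) (nJt j m))
        = -8 * (l1*l3 + l2*l4) ∧
    ((∑ i, ∑ j, ∑ k, ∑ m, Gt⁻¹ i j * Gt⁻¹ k m * gt (nJt i k) (nJt j m)) = 0 ↔
      l1*l3 + l2*l4 = 0) := by
  have hN := stmt_13' l1 l2 l3 l4 nt hnt_tor hnt_met
  have hV00 : nJt 0 0 = ![(0:ℝ), (-1/2)*l2, (0:ℝ), (-1/2)*l4] := by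
    rw [hnJt]; simp only [hN, Nv_eq, e0, e1, e2, e3]; funext m; fin_cases m <;>
      (norm_num [Jm, Pi.sub_apply, Matrix.cons_val_zero, Matrix.cons_val_one,
        Matrix.head_cons, Matrix.cons_val_two, Matrix.tail_cons, Matrix.cons_val_three]; try ring)
  have hV01 : nJt 0 1 = ![(1/2)*l2, (0:ℝ), (-1/2)*l4, 1*l3] := by
    rw [hnJt]; simp only [hN, Nv_eq, e0, e1, e2, e3]; funext m; fin_cases m <;>
      (norm_num [Jm, Pi.sub_apply, Matrix.cons_val_zero, Matrix.cons_val_one,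
        Matrix.head_cons, Matrix.cons_val_two, Matrix.tail_cons, Matrix.cons_val_three]; try ring)
  have hV02 : nJt 0 2 = ![(0:ℝ), (-1/2)*l4, (0:ℝ), (1/2)*l2] := by
    rw [hnJt]; simp only [hN, Nv_eq, e0, e1, e2, e3]; funext m; fin_cases m <;>
      (norm_num [Jm, Pi.sub_apply, Matrix.cons_val_zero, Matrix.cons_val_one,
        Matrix.head_cons, Matrix.cons_val_two, Matrix.tail_cons, Matrix.cons_val_three]; try ring)
  have hV03 : nJt 0 3 = ![(-1/2)*l4, 1*l3, (-1/2)*l2, (0:ℝ)] := by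
    rw [hnJt]; simp only [hN, Nv_eq, e0, e1, e2, e3]; funext m; fin_cases m <;>
      (norm_num [Jm, Pi.sub_apply, Matrix.cons_val_zero, Matrix.cons_val_one,
        Matrix.head_cons, Matrix.cons_val_two, Matrix.tail_cons, Matrix.cons_val_three]; try ring)
  have hV10 : nJt 1 0 = ![(0:ℝ), (1/2)*l1, 1*l4, (-1/2)*l3] := by
    rw [hnJt]; simp only [hN, Nv_eq, e0, e1, e2, e3]; funext m; fin_cases m <;>
      (norm_num [Jm, Pi.sub_apply, Matrix.cons_val_zero, Matrix.cons_val_one,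
        Matrix.head_cons, Matrix.cons_val_two, Matrix.tail_cons, Matrix.cons_val_three]; try ring)
  have hV11 : nJt 1 1 = ![(-1/2)*l1, (0:ℝ), (-1/2)*l3, (0:ℝ)] := by
    rw [hnJt]; simp only [hN, Nv_eq, e0, e1, e2, e3]; funext m; fin_cases m <;>
      (norm_num [Jm, Pi.sub_apply, Matrix.cons_val_zero, Matrix.cons_val_one,
        Matrix.head_cons, Matrix.cons_val_two, Matrix.tail_cons, Matrix.cons_val_three]; try ring)
  have hV12 : nJt 1 2 = ![1*l4, (-1/2)*l3, (0:ℝ), (-1/2)*l1] := by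
    rw [hnJt]; simp only [hN, Nv_eq, e0, e1, e2, e3]; funext m; fin_cases m <;>
      (norm_num [Jm, Pi.sub_apply, Matrix.cons_val_zero, Matrix.cons_val_one,
        Matrix.head_cons, Matrix.cons_val_two, Matrix.tail_cons, Matrix.cons_val_three]; try ring)
  have hV13 : nJt 1 3 = ![(-1/2)*l3, (0:ℝ), (1/2)*l1, (0:ℝ)] := by
    rw [hnJt]; simp only [hN, Nv_eq, e0, e1, e2, e3]; funext m; fin_cases m <;>
      (norm_num [Jm, Pi.sub_apply, Matrix.cons_val_zero, Matrix.cons_val_one,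
        Matrix.head_cons, Matrix.cons_val_two, Matrix.tail_cons, Matrix.cons_val_three]; try ring)
  have hV20 : nJt 2 0 = ![(0:ℝ), (1/2)*l4, (0:ℝ), (-1/2)*l2] := by
    rw [hnJt]; simp only [hN, Nv_eq, e0, e1, e2, e3]; funext m; fin_cases m <;>
      (norm_num [Jm, Pi.sub_apply, Matrix.cons_val_zero, Matrix.cons_val_one,
        Matrix.head_cons, Matrix.cons_val_two, Matrix.tail_cons, Matrix.cons_val_three]; try ring)
  have hV21 : nJt 2 1 = ![(-1/2)*l4, (0:ℝ), (-1/2)*l2, 1*l1] := by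
    rw [hnJt]; simp only [hN, Nv_eq, e0, e1, e2, e3]; funext m; fin_cases m <;>
      (norm_num [Jm, Pi.sub_apply, Matrix.cons_val_zero, Matrix.cons_val_one,
        Matrix.head_cons, Matrix.cons_val_two, Matrix.tail_cons, Matrix.cons_val_three]; try ring)
  have hV22 : nJt 2 2 = ![(0:ℝ), (-1/2)*l2, (0:ℝ), (-1/2)*l4] := by
    rw [hnJt]; simp only [hN, Nv_eq, e0, e1, e2, e3]; funext m; fin_cases m <;>
      (norm_num [Jm, Pi.sub_apply, Matrix.cons_val_zero, Matrix.cons_val_one,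
        Matrix.head_cons, Matrix.cons_val_two, Matrix.tail_cons, Matrix.cons_val_three]; try ring)
  have hV23 : nJt 2 3 = ![(-1/2)*l2, 1*l1, (1/2)*l4, (0:ℝ)] := by
    rw [hnJt]; simp only [hN, Nv_eq, e0, e1, e2, e3]; funext m; fin_cases m <;>
      (norm_num [Jm, Pi.sub_apply, Matrix.cons_val_zero, Matrix.cons_val_one,
        Matrix.head_cons, Matrix.cons_val_two, Matrix.tail_cons, Matrix.cons_val_three]; try ring)
  have hV30 : nJt 3 0 = ![(0:ℝ), (-1/2)*l3, 1*l2, (-1/2)*l1] := by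
    rw [hnJt]; simp only [hN, Nv_eq, e0, e1, e2, e3]; funext m; fin_cases m <;>
      (norm_num [Jm, Pi.sub_apply, Matrix.cons_val_zero, Matrix.cons_val_one,
        Matrix.head_cons, Matrix.cons_val_two, Matrix.tail_cons, Matrix.cons_val_three]; try ring)
  have hV31 : nJt 3 1 = ![(1/2)*l3, (0:ℝ), (-1/2)*l1, (0:ℝ)] := by
    rw [hnJt]; simp only [hN, Nv_eq, e0, e1, e2, e3]; funext m; fin_cases m <;>
      (norm_num [Jm, Pi.sub_apply, Matrix.cons_val_zero, Matrix.cons_val_one,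
        Matrix.head_cons, Matrix.cons_val_two, Matrix.tail_cons, Matrix.cons_val_three]; try ring)
  have hV32 : nJt 3 2 = ![1*l2, (-1/2)*l1, (0:ℝ), (1/2)*l3] := by
    rw [hnJt]; simp only [hN, Nv_eq, e0, e1, e2, e3]; funext m; fin_cases m <;>
      (norm_num [Jm, Pi.sub_apply, Matrix.cons_val_zero, Matrix.cons_val_one,
        Matrix.head_cons, Matrix.cons_val_two, Matrix.tail_cons, Matrix.cons_val_three]; try ring)
  have hV33 : nJt 3 3 = ![(-1/2)*l1, (0:ℝ), (-1/2)*l3, (0:ℝ)] := by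
    rw [hnJt]; simp only [hN, Nv_eq, e0, e1, e2, e3]; funext m; fin_cases m <;>
      (norm_num [Jm, Pi.sub_apply, Matrix.cons_val_zero, Matrix.cons_val_one,
        Matrix.head_cons, Matrix.cons_val_two, Matrix.tail_cons, Matrix.cons_val_three]; try ring)
  have hGtlit : Gt⁻¹ = !![0,0,-1,0; 0,0,0,-1; (-1),0,0,0; 0,(-1),0,0] := by
    rw [Gt_inv]
    ext i j
    fin_cases i <;> fin_cases j <;>
      (simp (config := { decide := true }) [Gt, gt, gm, Jm, e, Pi.single_apply];
        try norm_num [Matrix.vecHead, Matrix.vecTail])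
  have key : (∑ i, ∑ j, ∑ k, ∑ m, Gt⁻¹ i j * Gt⁻¹ k m * gt (nJt i k) (nJt j m))
      = -8 * (l1*l3 + l2*l4) := by
    simp only [Fin.sum_univ_four, hGtlit, hV00, hV01, hV02, hV03, hV10, hV11, hV12, hV13,
      hV20, hV21, hV22, hV23, hV30, hV31, hV32, hV33]
    norm_num [gt, gm, Jm, Matrix.cons_val_zero, Matrix.cons_val_one, Matrix.head_cons,
      Matrix.cons_val_two, Matrix.tail_cons, Matrix.cons_val_three, Matrix.cons_val',
      Matrix.cons_val_fin_one, Matrix.empty_val', Matrix.head_fin_const, Matrix.of_apply,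
      Matrix.vecHead, Matrix.vecTail]
    ring
  refine ⟨key, ?_⟩
  rw [key]
  constructor <;> intro h <;> linarith

end
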